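/- Let k be a positive integer and let G be a graph in 𝒢_k. Then every cycle in G of order at least k has order congruent to 0 modulo k. -/

import Mathlib

open SimpleGraph

section Helpers

variable {α : Type*} {H : SimpleGraph α}

/-- Build a walk from a function with consecutive adjacencies. -/
lemma walk_of_fn (f : ℕ → α) :
    ∀ (len : ℕ), (∀ t, t < len → H.Adj (f t) (f (t + 1))) →
      ∃ q : H.Walk (f 0) (f len), q.support = (List.range (len + 1)).map f
  | 0, _ => ⟨Walk.nil, by simp [List.range_succ]⟩
  | (len + 1), h => by
    obtain ⟨q, hq⟩ := walk_of_fn f len (fun t ht => h t (ht.trans (Nat.lt_succ_self _)))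
    refine ⟨q.concat (h len (Nat.lt_succ_self _)), ?_⟩
    rw [Walk.support_concat, hq]
    simp [List.range_succ]

lemma support_getElem : ∀ {u v : α} (p : H.Walk u v) (i : ℕ) (h : i < p.support.length),
    p.support[i] = p.getVert i
  | _, _, Walk.nil, i, h => by
    have : i = 0 := by simpa using h
    subst this; rfl
  | _, _, Walk.cons a q, 0, h => rfl
  | _, _, Walk.cons a q, (i + 1), h => by
    have := support_getElem q i (by simpa using h)
    simpa [Walk.getVert_cons_succ] using this

end Helpers

/-- `S` is the vertex set of a (not necessarily induced) path of order `k` in `G`,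
i.e. a `k`-path of `G`. -/
def IsPathSupport {V : Type*} (k : ℕ) (G : SimpleGraph V) (S : Set V) : Prop :=
  ∃ (u v : V) (p : G.Walk u v), p.IsPath ∧ p.support.length = k ∧ S = {x | x ∈ p.support}

/-- `X` is a `k`-vertex cover of `G`: every `k`-path of `G` contains a vertex of `X`. -/
def IsKVertexCover {V : Type*} (k : ℕ) (G : SimpleGraph V) (X : Finset V) : Prop :=
  ∀ S : Set V, IsPathSupport k G S → ∃ x ∈ X, x ∈ S

/-- The `k`-matching number `ν_k(G)`: the maximum number of pairwise disjoint
`k`-paths of `G`. -/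
noncomputable def nuK {V : Type*} (k : ℕ) (G : SimpleGraph V) : ℕ :=
  sSup {n | ∃ M : Finset (Set V), (∀ S ∈ M, IsPathSupport k G S) ∧
    (↑M : Set (Set V)).Pairwise Disjoint ∧ M.card = n}

/-- The `k`-vertex cover number `τ_k(G)`: the minimum cardinality of a `k`-vertex cover. -/
noncomputable def tauK {V : Type*} (k : ℕ) (G : SimpleGraph V) : ℕ :=
  sInf {n | ∃ X : Finset V, IsKVertexCover k G X ∧ X.card = n}

/-- `G` belongs to the class `𝒢_k`: `ν_k(H) = τ_k(H)` for every induced subgraph `H` of `G`. -/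
def memGclass {V : Type*} (k : ℕ) (G : SimpleGraph V) : Prop :=
  ∀ s : Set V, nuK k (G.induce s) = tauK k (G.induce s)

/-- Every cycle of order at least `k` in a graph of `𝒢_k` has order
divisible by `k`. The order of a cycle equals its length. -/
theorem stmt3 {V : Type*} [Fintype V] (k : ℕ) (hk : 0 < k) (G : SimpleGraph V)
    (hG : memGclass k G) (u : V) (c : G.Walk u u) (hc : c.IsCycle)
    (hlen : k ≤ c.length) :
    c.length % k = 0 := by
  classical
  set n := c.length with hn
  have hn0 : 0 < n := hk.trans_le hlen
  set s : Set V := {x | x ∈ c.support} with hs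
  set H := G.induce s with hH
  set g : ℕ → V := c.getVert with hg
  -- basic facts about the cycle
  have hgmem : ∀ j, g j ∈ s := by
    intro j
    show g j ∈ c.support
    rw [Walk.mem_support_iff_exists_getVert]
    rcases le_or_gt j n with h | h
    · exact ⟨j, rfl, h⟩
    · exact ⟨n, by rw [hg, Walk.getVert_of_length_le c h.le, Walk.getVert_length], le_rfl⟩
  have hlensupp : c.support.length = n + 1 := by rw [Walk.length_support]
  have htail : c.support.tail.Nodup := hc.support_nodup
  have htlen : c.support.tail.length = n := by rw [List.length_tail, hlensupp]; rfl
  have htne : c.support.tail ≠ [] := by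
    intro h; rw [h] at htlen; simp at htlen; omega
  have htlast : c.support.tail.getLast htne = u := by
    have h1 : c.support.tail.getLast htne = c.support.tail[n - 1]'(by omega) := by
      rw [List.getLast_eq_getElem]
      congr 1
      omega
    rw [h1, List.getElem_tail, support_getElem c]
    have h2 : n - 1 + 1 = n := by omega
    rw [h2]
    exact Walk.getVert_length c
  have htail_eq : c.support.tail = c.support.tail.dropLast ++ [u] := by
    conv_lhs => rw [← List.dropLast_append_getLast htne]
    rw [htlast]
  have hu_not_dl : u ∉ c.support.tail.dropLast := by
    have h1 := htail
    rw [htail_eq] at h1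
    have := List.disjoint_of_nodup_append h1
    intro hmem
    exact this hmem (by simp)
  have hdl_eq : c.support.dropLast = u :: c.support.tail.dropLast := by
    conv_lhs => rw [Walk.support_eq_cons c]
    rcases List.exists_cons_of_ne_nil htne with ⟨a, l, hal⟩
    rw [hal]
    simp [List.dropLast_cons₂]
  have hdl : c.support.dropLast.Nodup := by
    rw [hdl_eq]
    exact List.nodup_cons.mpr ⟨hu_not_dl, htail.sublist (List.dropLast_sublist _)⟩
  have hdlen : c.support.dropLast.length = n := by
    rw [List.length_dropLast, hlensupp]; rfl
  have hdget : ∀ i (hi : i < n), c.support.dropLast[i]'(by rw [hdlen]; exact hi) = g i := by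
    intro i hi
    rw [List.getElem_dropLast]
    exact support_getElem c i _
  have hginj : ∀ i j, i < n → j < n → g i = g j → i = j := by
    intro i j hi hj hij
    have h1 : c.support.dropLast[i]'(by rw [hdlen]; exact hi)
        = c.support.dropLast[j]'(by rw [hdlen]; exact hj) := by
      rw [hdget i hi, hdget j hj, hij]
    exact (hdl.getElem_inj_iff).mp h1
  -- positions
  have hposition : ∀ x ∈ s, ∃ j, j < n ∧ g j = x := by
    intro x hx
    obtain ⟨m, hm, hmle⟩ := Walk.mem_support_iff_exists_getVert.mp hx
    rcases lt_or_eq_of_le hmle with h | h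
    · exact ⟨m, h, hm⟩
    · refine ⟨0, hn0, ?_⟩
      rw [hg, Walk.getVert_zero, ← hm, h, Walk.getVert_length]
  -- cardinality of s
  have humem : u ∈ c.support.tail := by rw [htail_eq]; simp
  have hsfin : s.toFinset = c.support.toFinset := by ext x; simp [hs]
  have hcards : s.toFinset.card = n := by
    rw [hsfin]
    have h1 : c.support.toFinset = c.support.tail.toFinset := by
      conv_lhs => rw [Walk.support_eq_cons c]
      rw [List.toFinset_cons, Finset.insert_eq_self.mpr (List.mem_toFinset.mpr humem)]
    rw [h1, List.card_toFinset, htail.dedup, htlen]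
  have hcardS : Fintype.card ↥s = n := by
    rw [← Set.toFinset_card, hcards]
  -- Part A: any k-matching M in H satisfies M.card * k ≤ n
  have matchbound : ∀ (M : Finset (Set ↥s)), (∀ S ∈ M, IsPathSupport k H S) →
      (↑M : Set (Set ↥s)).Pairwise Disjoint → M.card * k ≤ n := by
    intro M hM hdisj
    have hScard : ∀ S ∈ M, S.toFinset.card = k := by
      intro S hS
      obtain ⟨a, b, p, hp, hplen, hSeq⟩ := hM S hS
      have he : S.toFinset = p.support.toFinset := by ext x; simp [hSeq]
      rw [he, List.card_toFinset, hp.support_nodup.dedup, hplen]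
    calc M.card * k = ∑ S ∈ M, S.toFinset.card := by
          rw [Finset.sum_congr rfl hScard, Finset.sum_const, smul_eq_mul]
      _ = (M.biUnion (fun S => S.toFinset)).card := by
          rw [Finset.card_biUnion]
          intro S hS T hT hST
          exact Set.disjoint_toFinset.mpr (hdisj hS hT hST)
      _ ≤ Fintype.card ↥s := Finset.card_le_univ _
      _ = n := hcardS
  -- nuK bound
  have hnu : nuK k H * k ≤ n := by
    have hne : {m | ∃ M : Finset (Set ↥s), (∀ S ∈ M, IsPathSupport k H S) ∧
        (↑M : Set (Set ↥s)).Pairwise Disjoint ∧ M.card = m}.Nonempty :=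
      ⟨0, ∅, by simp, by simp, rfl⟩
    have hbdd : BddAbove {m | ∃ M : Finset (Set ↥s), (∀ S ∈ M, IsPathSupport k H S) ∧
        (↑M : Set (Set ↥s)).Pairwise Disjoint ∧ M.card = m} := by
      refine ⟨n, fun m hm => ?_⟩
      obtain ⟨M, h1, h2, rfl⟩ := hm
      calc M.card = M.card * 1 := (mul_one _).symm
        _ ≤ M.card * k := Nat.mul_le_mul_left _ hk
        _ ≤ n := matchbound M h1 h2
    have hmem : nuK k H ∈ {m | ∃ M : Finset (Set ↥s), (∀ S ∈ M, IsPathSupport k H S) ∧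
        (↑M : Set (Set ↥s)).Pairwise Disjoint ∧ M.card = m} := Nat.sSup_mem hne hbdd
    obtain ⟨M, h1, h2, h3⟩ := hmem
    rw [← h3]
    exact matchbound M h1 h2
  -- tauK : get a minimal cover
  have htne' : {m | ∃ X : Finset ↥s, IsKVertexCover k H X ∧ X.card = m}.Nonempty := by
    refine ⟨Finset.univ.card, Finset.univ, ?_, rfl⟩
    intro S hS
    obtain ⟨a, b, p, hp, hplen, rfl⟩ := hS
    exact ⟨a, Finset.mem_univ _, by simp [Walk.start_mem_support]⟩
  have hXmem : tauK k H ∈ {m | ∃ X : Finset ↥s, IsKVertexCover k H X ∧ X.card = m} :=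
    Nat.sInf_mem htne'
  obtain ⟨X, hXcov, hXcard⟩ := hXmem
  -- Part B: n ≤ tauK * k
  have htau : n ≤ tauK k H * k := by
    by_contra hcon
    push_neg at hcon
    have hXk : X.card * k < n := by rw [hXcard]; exact hcon
    -- positions of X elements
    have hposY : ∀ y : ↥s, ∃ j, j < n ∧ g j = ↑y := fun y => hposition ↑y y.2
    choose pos hpos1 hpos2 using hposY
    set B : Finset ℕ := X.biUnion (fun y => (Finset.range k).image (fun t => (pos y + n - t) % n))
      with hB
    have hBcard : B.card < n := by
      calc B.card ≤ ∑ y ∈ X, ((Finset.range k).image (fun t => (pos y + n - t) % n)).card :=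
            Finset.card_biUnion_le
        _ ≤ ∑ _y ∈ X, k := Finset.sum_le_sum (fun y _ =>
            (Finset.card_image_le).trans (by rw [Finset.card_range]))
        _ = X.card * k := by rw [Finset.sum_const, smul_eq_mul]
        _ < n := hXk
    have hnsub : ¬ (Finset.range n ⊆ B) := by
      intro hsub
      have := Finset.card_le_card hsub
      rw [Finset.card_range] at this
      omega
    obtain ⟨i, hin, hiB⟩ := Finset.not_subset.mp hnsub
    rw [Finset.mem_range] at hin
    -- the free window
    have hfree : ∀ t, t < k → ∀ y ∈ X, g ((i + t) % n) ≠ ↑y := by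
      intro t ht y hy heq
      have h1 : (i + t) % n < n := Nat.mod_lt _ hn0
      have h2 : (i + t) % n = pos y := hginj _ _ h1 (hpos1 y) (heq.trans (hpos2 y).symm)
      apply hiB
      refine Finset.mem_biUnion.mpr ⟨y, hy, Finset.mem_image.mpr ⟨t, Finset.mem_range.mpr ht, ?_⟩⟩
      have htn : t ≤ n := le_of_lt (ht.trans_le hlen)
      rw [← h2, Nat.add_sub_assoc htn, Nat.mod_add_mod, Nat.add_assoc,
        Nat.add_sub_cancel' htn, Nat.add_mod_right, Nat.mod_eq_of_lt hin]
    have hwinj : ∀ t1 t2, t1 < k → t2 < k → (i + t1) % n = (i + t2) % n → t1 = t2 := by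
      intro t1 t2 h1 h2 heq
      have hm : Nat.ModEq n t1 t2 := Nat.ModEq.add_left_cancel' i heq
      have := hm.eq_of_lt_of_lt (h1.trans_le hlen) (h2.trans_le hlen)
      exact this
    -- build the uncovered k-path
    set F : ℕ → ↥s := fun t => ⟨g ((i + t) % n), hgmem _⟩ with hF
    have hadjF : ∀ t, t < k - 1 → H.Adj (F t) (F (t + 1)) := by
      intro t ht
      have hm : (i + t) % n < n := Nat.mod_lt _ hn0
      have hstep : G.Adj (g ((i + t) % n)) (g ((i + t) % n + 1)) := c.adj_getVert_succ hm
      have hmod : (i + (t + 1)) % n = ((i + t) % n + 1) % n := by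
        rw [Nat.mod_add_mod, Nat.add_assoc]
      have hg2 : g ((i + (t + 1)) % n) = g ((i + t) % n + 1) := by
        rcases lt_or_eq_of_le (Nat.succ_le_of_lt hm) with hLt | hEq
        · rw [hmod, Nat.mod_eq_of_lt hLt]
        · have hmn : (i + t) % n + 1 = n := hEq
          rw [hmod, hmn, Nat.mod_self]
          show c.getVert 0 = c.getVert c.length
          rw [Walk.getVert_zero, Walk.getVert_length]
      show G.Adj (g ((i + t) % n)) (g ((i + (t + 1)) % n))
      rw [hg2]
      exact hstep
    obtain ⟨q, hq⟩ := walk_of_fn (H := H) F (k - 1) hadjF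
    have hkm1 : k - 1 + 1 = k := Nat.sub_add_cancel hk
    have hqlen : q.support.length = k := by
      rw [hq, List.length_map, List.length_range, hkm1]
    have hqnodup : q.support.Nodup := by
      rw [hq]
      refine List.Nodup.map_on ?_ List.nodup_range
      intro t1 ht1 t2 ht2 hFt
      rw [List.mem_range, hkm1] at ht1 ht2
      have : g ((i + t1) % n) = g ((i + t2) % n) := congrArg Subtype.val hFt
      exact hwinj t1 t2 ht1 ht2 (hginj _ _ (Nat.mod_lt _ hn0) (Nat.mod_lt _ hn0) this)
    have hps : IsPathSupport k H {x | x ∈ q.support} :=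
      ⟨F 0, F (k - 1), q, Walk.IsPath.mk' hqnodup, hqlen, rfl⟩
    obtain ⟨y, hyX, hyS⟩ := hXcov _ hps
    have hyS' : y ∈ q.support := hyS
    rw [hq] at hyS'
    obtain ⟨t, htmem, hFt⟩ := List.mem_map.mp hyS'
    rw [List.mem_range, hkm1] at htmem
    exact hfree t htmem y hyX (congrArg Subtype.val hFt)
  -- conclude
  have heq := hG s
  rw [← hH] at heq
  have h1 : n ≤ nuK k H * k := by rw [heq]; exact htau
  have h2 : n = nuK k H * k := le_antisymm h1 hnu
  rw [hn] at h2 ⊢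
  rw [h2, Nat.mul_mod_left]
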